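/- If for all x ∈ X, x̂ ∈ X̂, and ŵ, w the interface inequality E[V(f(x,ν,w,ς), f̂(x̂,ν̂,ŵ,ς)) | ·] − V(x,x̂) ≤ −κ(V(x,x̂)) + ρ(‖ν̂‖) + ψ + [Gw − Ĝŵ; h₂(x) − Hĥ₂(x̂)]ᵀ X̄ [Gw − Ĝŵ; h₂(x) − Hĥ₂(x̂)] holds for each subsystem i with data (V_i, κ_i, ρ_i, ψ_i, G_i, Ĝ_i, H_i, X̄_i), and internal inputs are set by interconnection matrices w = M h₂(x), ŵ = M̂ ĥ₂(x̂), then under the conditions [GM; I]ᵀ X̄_cmp [GM; I] ⪯ 0 and GMH = ĜM̂, the stacked quadratic supply term Σ_i μ_i [G_i w_i − Ĝ_i ŵ_i; h_{2i}(x_i) − H_i ĥ_{2i}(x̂_i)]ᵀ X̄_i [...] equals zᵀ ([GM; I]ᵀ X̄_cmp [GM; I]) z ≤ 0 where z = [h_{21}(x_1) − H_1ĥ_{21}(x̂_1); ...; h_{2N}(x_N) − H_Nĥ_{2N}(x̂_N)], for μ_i > 0, G = diag(G_i), Ĝ = diag(Ĝ_i), H = diag(H_i), X̄_cmp the block-diagonal-by-partition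 weighted matrix of Theorem 4.2. -/

import Mathlib

open Matrix

private lemma bd_mulVec' {N : ℕ} {f g : Fin N → ℕ}
    (A : ∀ i, Matrix (Fin (f i)) (Fin (g i)) ℝ)
    (v : ((i : Fin N) × Fin (g i)) → ℝ) (i : Fin N) (b : Fin (f i)) :
    (Matrix.blockDiagonal' A *ᵥ v) ⟨i, b⟩ = (A i *ᵥ fun c => v ⟨i, c⟩) b := by
  simp only [Matrix.mulVec, dotProduct, ← Finset.univ_sigma_univ, Finset.sum_sigma]
  rw [Finset.sum_eq_single i]
  · exact Finset.sum_congr rfl fun c _ => by rw [Matrix.blockDiagonal'_apply_eq]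
  · intro j _ hj
    apply Finset.sum_eq_zero
    intro c _
    rw [Matrix.blockDiagonal'_apply_ne _ _ _ (Ne.symm hj), zero_mul]
  · simp

private lemma dot_bd {N : ℕ} {f g : Fin N → ℕ}
    (A : ∀ i, Matrix (Fin (f i)) (Fin (g i)) ℝ) (μ : Fin N → ℝ)
    (v : ((i : Fin N) × Fin (f i)) → ℝ) (w : ((i : Fin N) × Fin (g i)) → ℝ) :
    v ⬝ᵥ (Matrix.blockDiagonal' (fun i => μ i • A i) *ᵥ w)
      = ∑ i, μ i * ((fun b => v ⟨i, b⟩) ⬝ᵥ (A i *ᵥ fun c => w ⟨i, c⟩)) := by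
  have h : ∀ (i : Fin N) (b : Fin (f i)),
      (Matrix.blockDiagonal' (fun i => μ i • A i) *ᵥ w) ⟨i, b⟩
        = μ i * (A i *ᵥ fun c => w ⟨i, c⟩) b := by
    intro i b
    rw [bd_mulVec', Matrix.smul_mulVec]
    rfl
  simp only [dotProduct, ← Finset.univ_sigma_univ, Finset.sum_sigma, h, Finset.mul_sum]
  exact Finset.sum_congr rfl fun i _ => Finset.sum_congr rfl fun b _ => by ring


/-- The linear-algebraic identity and inequality in the chain (4.6) of the proof of
Theorem 4.2: with internal inputs `w = M h₂(x)`, `ŵ = M̂ ĥ₂(x̂)`, under the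
conditions `[GM; I]ᵀ X̄_cmp [GM; I] ⪯ 0` and `GMH = ĜM̂`, the weighted sum of the
subsystem quadratic supply rates equals `zᵀ([GM; I]ᵀ X̄_cmp [GM; I])z ≤ 0`, where
`z` is the stacked vector of output mismatches `h_{2i}(x_i) − H_i ĥ_{2i}(x̂_i)`. -/
theorem stmt_16 {N : ℕ} (mi pii phii qi : Fin N → ℕ)
    (G : ∀ i, Matrix (Fin (mi i)) (Fin (pii i)) ℝ)
    (Gh : ∀ i, Matrix (Fin (mi i)) (Fin (phii i)) ℝ)
    (Hm : ∀ i, Matrix (Fin (qi i)) (Fin (qi i)) ℝ)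
    (X11 : ∀ i, Matrix (Fin (mi i)) (Fin (mi i)) ℝ)
    (X12 : ∀ i, Matrix (Fin (mi i)) (Fin (qi i)) ℝ)
    (X21 : ∀ i, Matrix (Fin (qi i)) (Fin (mi i)) ℝ)
    (X22 : ∀ i, Matrix (Fin (qi i)) (Fin (qi i)) ℝ)
    (μ : Fin N → ℝ) (hμ : ∀ i, 0 < μ i)
    (M : Matrix ((i : Fin N) × Fin (pii i)) ((i : Fin N) × Fin (qi i)) ℝ)
    (Mh : Matrix ((i : Fin N) × Fin (phii i)) ((i : Fin N) × Fin (qi i)) ℝ)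
    -- the composite supply-rate matrix `X̄_cmp` and the stacked matrix `[GM; I]`
    (Xcmp : Matrix (((i : Fin N) × Fin (mi i)) ⊕ ((i : Fin N) × Fin (qi i)))
      (((i : Fin N) × Fin (mi i)) ⊕ ((i : Fin N) × Fin (qi i))) ℝ)
    (hXcmp : Xcmp = Matrix.fromBlocks
      (Matrix.blockDiagonal' fun i => μ i • X11 i)
      (Matrix.blockDiagonal' fun i => μ i • X12 i)
      (Matrix.blockDiagonal' fun i => μ i • X21 i)
      (Matrix.blockDiagonal' fun i => μ i • X22 i))
    (B : Matrix (((i : Fin N) × Fin (mi i)) ⊕ ((i : Fin N) × Fin (qi i)))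
      ((i : Fin N) × Fin (qi i)) ℝ)
    (hB : B = Matrix.fromRows (Matrix.blockDiagonal' G * M) 1)
    -- compositionality conditions (4.2) and (4.3)
    (hPSD : (-(Bᵀ * Xcmp * B)).PosSemidef)
    (hGMH : Matrix.blockDiagonal' G * M * Matrix.blockDiagonal' Hm
      = Matrix.blockDiagonal' Gh * Mh) :
    -- for stacked concrete outputs `a = h₂(x)` and abstract outputs `ah = ĥ₂(x̂)`
    ∀ a ah : ((i : Fin N) × Fin (qi i)) → ℝ,
      (∑ i, μ i *
        ((Sum.elim
            (G i *ᵥ (fun b => (M *ᵥ a) ⟨i, b⟩) - Gh i *ᵥ (fun b => (Mh *ᵥ ah) ⟨i, b⟩))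
            (fun b => (a - Matrix.blockDiagonal' Hm *ᵥ ah) ⟨i, b⟩)) ⬝ᵥ
          (Matrix.fromBlocks (X11 i) (X12 i) (X21 i) (X22 i) *ᵥ
            Sum.elim
              (G i *ᵥ (fun b => (M *ᵥ a) ⟨i, b⟩) - Gh i *ᵥ (fun b => (Mh *ᵥ ah) ⟨i, b⟩))
              (fun b => (a - Matrix.blockDiagonal' Hm *ᵥ ah) ⟨i, b⟩))))
      = (a - Matrix.blockDiagonal' Hm *ᵥ ah) ⬝ᵥ
          ((Bᵀ * Xcmp * B) *ᵥ (a - Matrix.blockDiagonal' Hm *ᵥ ah)) ∧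
      (∑ i, μ i *
        ((Sum.elim
            (G i *ᵥ (fun b => (M *ᵥ a) ⟨i, b⟩) - Gh i *ᵥ (fun b => (Mh *ᵥ ah) ⟨i, b⟩))
            (fun b => (a - Matrix.blockDiagonal' Hm *ᵥ ah) ⟨i, b⟩)) ⬝ᵥ
          (Matrix.fromBlocks (X11 i) (X12 i) (X21 i) (X22 i) *ᵥ
            Sum.elim
              (G i *ᵥ (fun b => (M *ᵥ a) ⟨i, b⟩) - Gh i *ᵥ (fun b => (Mh *ᵥ ah) ⟨i, b⟩))
              (fun b => (a - Matrix.blockDiagonal' Hm *ᵥ ah) ⟨i, b⟩)))) ≤ 0 := by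
  intro a ah
  set z : ((i : Fin N) × Fin (qi i)) → ℝ := a - Matrix.blockDiagonal' Hm *ᵥ ah with hzdef
  set u : ((i : Fin N) × Fin (mi i)) → ℝ := (Matrix.blockDiagonal' G * M) *ᵥ z with hudef
  have hu : u = Matrix.blockDiagonal' G *ᵥ (M *ᵥ a)
      - Matrix.blockDiagonal' Gh *ᵥ (Mh *ᵥ ah) := by
    rw [hudef, hzdef, Matrix.mulVec_sub, Matrix.mulVec_mulVec, hGMH]
    simp only [← Matrix.mulVec_mulVec]
  have key : ∀ i : Fin N,
      (G i *ᵥ (fun b => (M *ᵥ a) ⟨i, b⟩) - Gh i *ᵥ (fun b => (Mh *ᵥ ah) ⟨i, b⟩))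
        = fun b => u ⟨i, b⟩ := by
    intro i
    funext b
    simp only [hu, Pi.sub_apply, bd_mulVec']
  have hBz : B *ᵥ z = Sum.elim u z := by
    rw [hB, Matrix.fromRows_mulVec, Matrix.one_mulVec, ← hudef]
  have hR : z ⬝ᵥ ((Bᵀ * Xcmp * B) *ᵥ z) = Sum.elim u z ⬝ᵥ (Xcmp *ᵥ Sum.elim u z) := by
    rw [Matrix.mul_assoc, ← Matrix.mulVec_mulVec, Matrix.dotProduct_mulVec,
      Matrix.vecMul_transpose, hBz, ← Matrix.mulVec_mulVec, hBz]
  have expandR : Sum.elim u z ⬝ᵥ (Xcmp *ᵥ Sum.elim u z)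
      = ∑ i, μ i * (((fun b => u ⟨i, b⟩) ⬝ᵥ (X11 i *ᵥ fun c => u ⟨i, c⟩))
          + ((fun b => u ⟨i, b⟩) ⬝ᵥ (X12 i *ᵥ fun c => z ⟨i, c⟩))
          + ((fun b => z ⟨i, b⟩) ⬝ᵥ (X21 i *ᵥ fun c => u ⟨i, c⟩))
          + ((fun b => z ⟨i, b⟩) ⬝ᵥ (X22 i *ᵥ fun c => z ⟨i, c⟩))) := by
    rw [hXcmp, Matrix.fromBlocks_mulVec, sumElim_dotProduct_sumElim]
    simp only [Sum.elim_comp_inl, Sum.elim_comp_inr]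
    rw [dotProduct_add, dotProduct_add, dot_bd, dot_bd, dot_bd, dot_bd,
      ← Finset.sum_add_distrib, ← Finset.sum_add_distrib, ← Finset.sum_add_distrib]
    exact Finset.sum_congr rfl fun i _ => by ring
  have expandL : ∀ i : Fin N,
      (Sum.elim (fun b => u ⟨i, b⟩) (fun b => z ⟨i, b⟩)) ⬝ᵥ
          (Matrix.fromBlocks (X11 i) (X12 i) (X21 i) (X22 i) *ᵥ
            Sum.elim (fun b => u ⟨i, b⟩) (fun b => z ⟨i, b⟩))
        = ((fun b => u ⟨i, b⟩) ⬝ᵥ (X11 i *ᵥ fun c => u ⟨i, c⟩))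
          + ((fun b => u ⟨i, b⟩) ⬝ᵥ (X12 i *ᵥ fun c => z ⟨i, c⟩))
          + ((fun b => z ⟨i, b⟩) ⬝ᵥ (X21 i *ᵥ fun c => u ⟨i, c⟩))
          + ((fun b => z ⟨i, b⟩) ⬝ᵥ (X22 i *ᵥ fun c => z ⟨i, c⟩)) := by
    intro i
    rw [Matrix.fromBlocks_mulVec, sumElim_dotProduct_sumElim]
    simp only [Sum.elim_comp_inl, Sum.elim_comp_inr]
    rw [dotProduct_add, dotProduct_add]
    ring
  have hEq : (∑ i, μ i *
        ((Sum.elim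
            (G i *ᵥ (fun b => (M *ᵥ a) ⟨i, b⟩) - Gh i *ᵥ (fun b => (Mh *ᵥ ah) ⟨i, b⟩))
            (fun b => z ⟨i, b⟩)) ⬝ᵥ
          (Matrix.fromBlocks (X11 i) (X12 i) (X21 i) (X22 i) *ᵥ
            Sum.elim
              (G i *ᵥ (fun b => (M *ᵥ a) ⟨i, b⟩) - Gh i *ᵥ (fun b => (Mh *ᵥ ah) ⟨i, b⟩))
              (fun b => z ⟨i, b⟩))))
      = z ⬝ᵥ ((Bᵀ * Xcmp * B) *ᵥ z) := by
    rw [hR, expandR]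
    exact Finset.sum_congr rfl fun i _ => by rw [key i, expandL i]
  refine ⟨hEq, hEq.trans_le ?_⟩
  have h0 := hPSD.dotProduct_mulVec_nonneg z
  simp only [star_trivial, Matrix.neg_mulVec, dotProduct_neg] at h0
  linarith
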